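/- Let H be a connected r-uniform hypergraph on n vertices with diameter D and spectral radius ρ, and let H' be a proper sub-hypergraph of H. Then ρ(H) − ρ(H') ≥ min{ r/(n·ρ^{r(r−1)(D+1)}), 1/(n·ρ^{rD}·(ρ^{r−1} + r − 1)) }. -/

import Mathlib

/-- `hconn E k u v` : there is a walk of length `k` from `u` to `v` in the hypergraph
with edge set `E`, i.e. an alternating sequence of vertices and edges where consecutive
vertices both lie in the connecting edge. -/
def hconn {n : ℕ} (E : Finset (Finset (Fin n))) : ℕ → Fin n → Fin n → Prop
  | 0, u, v => u = v
  | k + 1, u, v => ∃ e ∈ E, ∃ w ∈ e, u ∈ e ∧ hconn E k w v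

/-- Distance between two vertices of a hypergraph: minimum length of a connecting walk. -/
noncomputable def hdist {n : ℕ} (E : Finset (Finset (Fin n))) (u v : Fin n) : ℕ :=
  sInf {k | hconn E k u v}

/-- Diameter of a hypergraph: maximum distance between two vertices. -/
noncomputable def hdiam {n : ℕ} (E : Finset (Finset (Fin n))) : ℕ :=
  sSup {d | ∃ u v : Fin n, hdist E u v = d}

/-- A hypergraph is connected if any two vertices are joined by a walk. -/
def HConnected {n : ℕ} (E : Finset (Finset (Fin n))) : Prop :=
  ∀ u v : Fin n, ∃ k, hconn E k u v

/-- Degree of a vertex: the number of edges containing it. -/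
def hdeg {n : ℕ} (E : Finset (Finset (Fin n))) (v : Fin n) : ℕ :=
  (E.filter (fun e => v ∈ e)).card

/-- The spectral radius of an `r`-uniform hypergraph with edge set `E`, via the
variational characterization `ρ(A) = max { x^T (A x^{r-1}) : x ≥ 0, ∑ x_i^r = 1 }`,
where `x^T (A x^{r-1}) = r ∑_{e ∈ E} ∏_{j ∈ e} x_j`. -/
noncomputable def specRad {n : ℕ} (r : ℕ) (E : Finset (Finset (Fin n))) : ℝ :=
  sSup {t | ∃ x : Fin n → ℝ, (∀ i, 0 ≤ x i) ∧ (∑ i, x i ^ r = 1) ∧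
    t = r * ∑ e ∈ E, ∏ j ∈ e, x j}

namespace SR19

variable {n : ℕ}

noncomputable def PP (r : ℕ) (F : Finset (Finset (Fin n))) (x : Fin n → ℝ) : ℝ :=
  r * ∑ e ∈ F, ∏ j ∈ e, x j

def SS (r : ℕ) (F : Finset (Finset (Fin n))) : Set ℝ :=
  {t | ∃ x : Fin n → ℝ, (∀ i, 0 ≤ x i) ∧ (∑ i, x i ^ r = 1) ∧ t = PP r F x}

lemma specRad_eq (r : ℕ) (F : Finset (Finset (Fin n))) : specRad r F = sSup (SS r F) := rfl

lemma PP_nonneg {r : ℕ} {F : Finset (Finset (Fin n))} {x : Fin n → ℝ} (hx : ∀ i, 0 ≤ x i) :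
    0 ≤ PP r F x :=
  mul_nonneg (by positivity)
    (Finset.sum_nonneg fun e _ => Finset.prod_nonneg fun j _ => hx j)

lemma feas_le_one {r : ℕ} {x : Fin n → ℝ} (hr0 : 0 < r) (hx : ∀ i, 0 ≤ x i)
    (hx2 : ∑ i, x i ^ r = 1) (i : Fin n) : x i ≤ 1 := by
  have h1 : x i ^ r ≤ 1 := by
    rw [← hx2]
    exact Finset.single_le_sum (fun j _ => pow_nonneg (hx j) r) (Finset.mem_univ i)
  exact (pow_le_one_iff_of_nonneg (hx i) hr0.ne').mp h1

lemma bddAbove_SS {r : ℕ} {F : Finset (Finset (Fin n))} (hr0 : 0 < r) :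
    BddAbove (SS r F) := by
  refine ⟨r * F.card, ?_⟩
  rintro t ⟨x, hx1, hx2, rfl⟩
  unfold PP
  have h : ∑ e ∈ F, ∏ j ∈ e, x j ≤ ∑ _e ∈ F, (1:ℝ) :=
    Finset.sum_le_sum fun e _ =>
      Finset.prod_le_one (fun j _ => hx1 j) (fun j _ => feas_le_one hr0 hx1 hx2 j)
  simp only [Finset.sum_const, nsmul_eq_mul, mul_one] at h
  exact mul_le_mul_of_nonneg_left h (by positivity)

lemma SS_nonempty {r : ℕ} {F : Finset (Finset (Fin n))} (hr0 : 0 < r) (hn : 0 < n) :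
    (SS r F).Nonempty := by
  have w : Fin n := ⟨0, hn⟩
  refine ⟨PP r F (fun i => if i = w then 1 else 0), fun i => if i = w then 1 else 0, ?_, ?_, rfl⟩
  · intro i; dsimp only; split <;> norm_num
  · have : ∀ i : Fin n, (if i = w then (1:ℝ) else 0) ^ r = if i = w then (1:ℝ) else 0 := by
      intro i; split <;> simp [zero_pow hr0.ne']
    rw [Finset.sum_congr rfl fun i _ => this i]
    simp

lemma le_specRad {r : ℕ} {F : Finset (Finset (Fin n))} (hr0 : 0 < r) {x : Fin n → ℝ}
    (h1 : ∀ i, 0 ≤ x i) (h2 : ∑ i, x i ^ r = 1) : PP r F x ≤ specRad r F := by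
  rw [specRad_eq]; exact le_csSup (bddAbove_SS hr0) ⟨x, h1, h2, rfl⟩

lemma specRad_nonneg {r : ℕ} {F : Finset (Finset (Fin n))} (hr0 : 0 < r) (hn : 0 < n) :
    0 ≤ specRad r F := by
  obtain ⟨t, x, h1, h2, rfl⟩ := SS_nonempty (r := r) (F := F) hr0 hn
  exact le_trans (PP_nonneg h1) (le_specRad hr0 h1 h2)

lemma specRad_mono {r : ℕ} (hr0 : 0 < r) (hn : 0 < n) {F G : Finset (Finset (Fin n))}
    (hFG : F ⊆ G) : specRad r F ≤ specRad r G := by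
  rw [specRad_eq, specRad_eq]
  refine csSup_le (SS_nonempty hr0 hn) ?_
  rintro t ⟨x, h1, h2, rfl⟩
  have hle : PP r F x ≤ PP r G x := by
    unfold PP
    refine mul_le_mul_of_nonneg_left ?_ (by positivity)
    exact Finset.sum_le_sum_of_subset_of_nonneg hFG
      (fun e _ _ => Finset.prod_nonneg fun j _ => h1 j)
  exact le_trans hle (le_csSup (bddAbove_SS hr0) ⟨x, h1, h2, rfl⟩)

lemma exists_max {r : ℕ} {F : Finset (Finset (Fin n))} (hr0 : 0 < r) (hn : 0 < n) :
    ∃ x : Fin n → ℝ, (∀ i, 0 ≤ x i) ∧ (∑ i, x i ^ r = 1) ∧ PP r F x = specRad r F := by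
  set K : Set (Fin n → ℝ) := {x | (∀ i, 0 ≤ x i) ∧ ∑ i, x i ^ r = 1} with hK
  have hcont : Continuous fun x : Fin n → ℝ => PP r F x := by
    unfold PP
    exact continuous_const.mul
      (continuous_finset_sum _ fun e _ => continuous_finset_prod _ fun j _ => continuous_apply j)
  have hKne : K.Nonempty := by
    obtain ⟨t, x, h1, h2, rfl⟩ := SS_nonempty (r := r) (F := F) hr0 hn
    exact ⟨x, h1, h2⟩
  have hKclosed : IsClosed K := by
    have : K = (⋂ i, {x : Fin n → ℝ | 0 ≤ x i}) ∩ {x | ∑ i, x i ^ r = 1} := by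
      ext x; simp [hK, Set.mem_iInter]
    rw [this]
    exact IsClosed.inter
      (isClosed_iInter fun i => isClosed_le continuous_const (continuous_apply i))
      (isClosed_eq (continuous_finset_sum _ fun i _ => (continuous_apply i).pow r)
        continuous_const)
  have hKcomp : IsCompact K := by
    refine IsCompact.of_isClosed_subset
      (isCompact_univ_pi (fun _ : Fin n => isCompact_Icc (a := (0:ℝ)) (b := 1)))
      hKclosed ?_
    intro x hx i _
    exact ⟨hx.1 i, feas_le_one hr0 hx.1 hx.2 i⟩
  obtain ⟨x, hxK, hxmax⟩ := hKcomp.exists_isMaxOn hKne hcont.continuousOn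
  refine ⟨x, hxK.1, hxK.2, ?_⟩
  rw [specRad_eq]
  refine le_antisymm (le_csSup (bddAbove_SS hr0) ⟨x, hxK.1, hxK.2, rfl⟩) ?_
  refine csSup_le (SS_nonempty hr0 hn) ?_
  rintro t ⟨z, h1, h2, rfl⟩
  exact hxmax ⟨h1, h2⟩

lemma homog {r : ℕ} {F : Finset (Finset (Fin n))} (hr : 2 ≤ r) (hn : 0 < n)
    (huF : ∀ e ∈ F, e.card = r) {z : Fin n → ℝ} (hz : ∀ i, 0 ≤ z i) :
    PP r F z ≤ specRad r F * ∑ i, z i ^ r := by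
  have hr0 : 0 < r := by omega
  set C := ∑ i, z i ^ r with hC
  have hC0 : 0 ≤ C := Finset.sum_nonneg fun i _ => pow_nonneg (hz i) r
  rcases eq_or_lt_of_le hC0 with h0 | hpos
  · have hz0 : ∀ i, z i = 0 := by
      intro i
      have hle : z i ^ r ≤ C :=
        Finset.single_le_sum (fun j _ => pow_nonneg (hz j) r) (Finset.mem_univ i)
      have h2 : 0 ≤ z i ^ r := pow_nonneg (hz i) r
      have : z i ^ r = 0 := le_antisymm (by linarith) h2
      exact pow_eq_zero_iff hr0.ne' |>.mp this
    have hPP : PP r F z = 0 := by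
      unfold PP
      have h : ∀ e ∈ F, ∏ j ∈ e, z j = 0 := by
        intro e he
        have hene : e.Nonempty := by
          rw [← Finset.card_pos, huF e he]; omega
        obtain ⟨j, hj⟩ := hene
        exact Finset.prod_eq_zero hj (hz0 j)
      rw [Finset.sum_congr rfl h]; simp
    rw [hPP, ← h0, mul_zero]
  · set c := C ^ (-(1:ℝ)/r) with hc
    have hcpos : 0 < c := Real.rpow_pos_of_pos hpos _
    have hcr : c ^ r = C⁻¹ := by
      rw [hc, ← Real.rpow_natCast (C ^ (-(1:ℝ)/r)) r, ← Real.rpow_mul hpos.le]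
      rw [show (-(1:ℝ)/r) * r = -1 by field_simp]
      rw [Real.rpow_neg_one]
    have hx1 : ∀ i, 0 ≤ z i * c := fun i => mul_nonneg (hz i) hcpos.le
    have hx2 : ∑ i, (z i * c) ^ r = 1 := by
      have : ∀ i : Fin n, (z i * c) ^ r = z i ^ r * c ^ r := fun i => mul_pow _ _ _
      rw [Finset.sum_congr rfl fun i _ => this i, ← Finset.sum_mul, ← hC, hcr,
        mul_inv_cancel₀ hpos.ne']
    have hPPx : PP r F (fun i => z i * c) = C⁻¹ * PP r F z := by
      unfold PP
      have h : ∀ e ∈ F, ∏ j ∈ e, (z j * c) = (∏ j ∈ e, z j) * c ^ r := by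
        intro e he
        rw [Finset.prod_mul_distrib, Finset.prod_const, huF e he]
      rw [Finset.sum_congr rfl h, ← Finset.sum_mul, hcr]
      ring
    have hle := le_specRad (F := F) hr0 hx1 hx2
    rw [hPPx] at hle
    have := mul_le_mul_of_nonneg_left hle hpos.le
    rw [← mul_assoc, mul_inv_cancel₀ hpos.ne', one_mul] at this
    linarith [this, mul_comm (specRad r F) C]

lemma one_le_specRad {r : ℕ} {E : Finset (Finset (Fin n))} (hr : 2 ≤ r) (hn : 0 < n)
    {e0 : Finset (Fin n)} (he0 : e0 ∈ E) (hcard : e0.card = r) : 1 ≤ specRad r E := by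
  classical
  have hr0 : 0 < r := by omega
  set c : ℝ := (r:ℝ) ^ (-(1:ℝ)/r) with hc
  have hrpos : (0:ℝ) < r := by exact_mod_cast hr0
  have hcpos : 0 < c := Real.rpow_pos_of_pos hrpos _
  have hcr : c ^ r = ((r:ℝ))⁻¹ := by
    rw [hc, ← Real.rpow_natCast ((r:ℝ) ^ (-(1:ℝ)/r)) r, ← Real.rpow_mul hrpos.le]
    rw [show (-(1:ℝ)/r) * r = -1 by field_simp]
    rw [Real.rpow_neg_one]
  set x : Fin n → ℝ := fun i => if i ∈ e0 then c else 0 with hxdef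
  have hx1 : ∀ i, 0 ≤ x i := by
    intro i; simp only [hxdef]; split
    · exact hcpos.le
    · exact le_rfl
  have hx2 : ∑ i, x i ^ r = 1 := by
    have h : ∀ i : Fin n, x i ^ r = if i ∈ e0 then c ^ r else 0 := by
      intro i; simp only [hxdef]; split
      · rfl
      · exact zero_pow hr0.ne'
    rw [Finset.sum_congr rfl fun i _ => h i, Finset.sum_ite_mem, Finset.univ_inter,
      Finset.sum_const, hcard, hcr, nsmul_eq_mul, mul_inv_cancel₀ hrpos.ne']
  have hprod : ∏ j ∈ e0, x j = c ^ r := by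
    have h : ∀ j ∈ e0, x j = c := by intro j hj; simp only [hxdef]; simp [hj]
    rw [Finset.prod_congr rfl h, Finset.prod_const, hcard]
  have hval : 1 ≤ PP r E x := by
    have h2 : ∏ j ∈ e0, x j ≤ ∑ e ∈ E, ∏ j ∈ e, x j :=
      Finset.single_le_sum (f := fun e => ∏ j ∈ e, x j)
        (fun e _ => Finset.prod_nonneg fun j _ => hx1 j) he0
    unfold PP
    calc (1:ℝ) = r * (r:ℝ)⁻¹ := by field_simp
    _ = r * ∏ j ∈ e0, x j := by rw [hprod, hcr]
    _ ≤ r * ∑ e ∈ E, ∏ j ∈ e, x j := mul_le_mul_of_nonneg_left h2 (by positivity)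
  exact le_trans hval (le_specRad hr0 hx1 hx2)

lemma support_pos {r : ℕ} {F : Finset (Finset (Fin n))} (hr : 2 ≤ r) (hn : 0 < n)
    (huF : ∀ e ∈ F, e.card = r) {x : Fin n → ℝ}
    (hx1 : ∀ i, 0 ≤ x i) (hx2 : ∑ i, x i ^ r = 1) (hxv : PP r F x = specRad r F)
    {e : Finset (Fin n)} (he : e ∈ F) {v : Fin n} (hv : v ∈ e) (hvpos : 0 < x v) :
    ∀ j ∈ e, 0 < x j := by
  classical
  have hr0 : 0 < r := by omega
  by_contra hcon
  push_neg at hcon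
  obtain ⟨j0, hj0e, hj0⟩ := hcon
  set Z := e.filter (fun j => x j = 0) with hZ
  have hj0Z : j0 ∈ Z :=
    Finset.mem_filter.mpr ⟨hj0e, le_antisymm hj0 (hx1 j0)⟩
  have hZsub : Z ⊆ e := Finset.filter_subset _ _
  set s := Z.card with hs
  have hs1 : 1 ≤ s := Finset.card_pos.mpr ⟨j0, hj0Z⟩
  have hvZ : v ∉ Z := by
    intro h
    have := (Finset.mem_filter.mp h).2
    linarith
  have hsr : s < r := by
    rw [← huF e he]
    exact Finset.card_lt_card (Finset.ssubset_iff_of_subset hZsub |>.mpr ⟨v, hv, hvZ⟩)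
  set π := ∏ j ∈ e \ Z, x j with hπ
  have hπpos : 0 < π := by
    refine Finset.prod_pos fun j hj => ?_
    obtain ⟨hje, hjZ⟩ := Finset.mem_sdiff.mp hj
    rcases (hx1 j).lt_or_eq with h | h
    · exact h
    · exact absurd (Finset.mem_filter.mpr ⟨hje, h.symm⟩) hjZ
  set ρ := specRad r F with hρ
  have hρ0 : 0 ≤ ρ := specRad_nonneg hr0 hn
  have key : ∀ τ : ℝ, 0 < τ → τ ≤ 1 → (r:ℝ) * π * τ ^ s ≤ ρ * s * τ ^ r := by
    intro τ hτ0 hτ1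
    set z : Fin n → ℝ := fun i => if i ∈ Z then τ else x i with hzdef
    have hz1 : ∀ i, 0 ≤ z i := by
      intro i; simp only [hzdef]; split
      · exact hτ0.le
      · exact hx1 i
    have hz2 : ∑ i, z i ^ r = 1 + s * τ ^ r := by
      rw [← Finset.sum_sdiff (Finset.subset_univ Z)]
      have hA : ∀ i ∈ Finset.univ \ Z, z i ^ r = x i ^ r := by
        intro i hi; simp [hzdef, (Finset.mem_sdiff.mp hi).2]
      have hB : ∀ i ∈ Z, z i ^ r = τ ^ r := by
        intro i hi; simp [hzdef, hi]
      rw [Finset.sum_congr rfl hA, Finset.sum_congr rfl hB, Finset.sum_const, nsmul_eq_mul]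
      have hx2' : ∑ i ∈ Finset.univ \ Z, x i ^ r = 1 := by
        have := Finset.sum_sdiff (f := fun i => x i ^ r) (Finset.subset_univ Z)
        have hZ0 : ∑ i ∈ Z, x i ^ r = 0 := by
          refine Finset.sum_eq_zero fun i hi => ?_
          rw [(Finset.mem_filter.mp hi).2, zero_pow hr0.ne']
        rw [hZ0, add_zero] at this
        rw [this, hx2]
      rw [hx2']
    have hedge : ∏ j ∈ e, z j = τ ^ s * π := by
      rw [← Finset.prod_sdiff hZsub]
      have hA : ∀ j ∈ e \ Z, z j = x j := by
        intro j hj; simp [hzdef, (Finset.mem_sdiff.mp hj).2]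
      have hB : ∀ j ∈ Z, z j = τ := by
        intro j hj; simp [hzdef, hj]
      rw [Finset.prod_congr rfl hA, Finset.prod_congr rfl hB, Finset.prod_const]
      ring
    have hprodle : ∀ f ∈ F, ∏ j ∈ f, x j ≤ ∏ j ∈ f, z j := by
      intro f _
      refine Finset.prod_le_prod (fun j _ => hx1 j) (fun j _ => ?_)
      simp only [hzdef]; split
      · rename_i hjZ
        rw [(Finset.mem_filter.mp hjZ).2]
        exact hτ0.le
      · exact le_rfl
    have hex : ∏ j ∈ e, x j = 0 :=
      Finset.prod_eq_zero hj0e (Finset.mem_filter.mp hj0Z).2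
    have hsum : (∑ f ∈ F, ∏ j ∈ f, x j) + τ ^ s * π ≤ ∑ f ∈ F, ∏ j ∈ f, z j := by
      rw [← Finset.add_sum_erase F _ he, ← Finset.add_sum_erase F (fun f => ∏ j ∈ f, z j) he,
        hex, hedge, zero_add]
      have hrest : ∑ f ∈ F.erase e, ∏ j ∈ f, x j ≤ ∑ f ∈ F.erase e, ∏ j ∈ f, z j :=
        Finset.sum_le_sum fun f hf => hprodle f (Finset.mem_of_mem_erase hf)
      linarith
    have hPPz : PP r F x + (r:ℝ) * (τ ^ s * π) ≤ PP r F z := by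
      unfold PP
      calc (r:ℝ) * ∑ f ∈ F, ∏ j ∈ f, x j + (r:ℝ) * (τ ^ s * π)
          = (r:ℝ) * ((∑ f ∈ F, ∏ j ∈ f, x j) + τ ^ s * π) := by ring
        _ ≤ (r:ℝ) * ∑ f ∈ F, ∏ j ∈ f, z j := mul_le_mul_of_nonneg_left hsum (by positivity)
    have hup := homog hr hn huF hz1
    rw [hz2] at hup
    rw [hxv] at hPPz
    have : ρ + (r:ℝ) * (τ ^ s * π) ≤ ρ * (1 + s * τ ^ r) := le_trans hPPz hup
    nlinarith
  have hrπ : 0 < (r:ℝ) * π := by positivity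
  rcases le_or_gt (ρ * s) 0 with hc1 | hc1
  · have h1 := key 1 one_pos le_rfl
    simp only [one_pow, mul_one] at h1
    linarith
  · set τ0 := min 1 ((r:ℝ) * π / (2 * (ρ * s))) with hτ0def
    have hτ0pos : 0 < τ0 := lt_min one_pos (by positivity)
    have h2 := key τ0 hτ0pos (min_le_left _ _)
    have hτs : 0 < τ0 ^ s := pow_pos hτ0pos s
    have hcancel : (r:ℝ) * π ≤ ρ * s * τ0 := by
      have hτr : τ0 ^ r ≤ τ0 ^ s * τ0 := by
        have hsplit : τ0 ^ r = τ0 ^ s * τ0 ^ (r - s) := by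
          rw [← pow_add]; congr 1; omega
        have hle1 : τ0 ^ (r - s) ≤ τ0 := by
          calc τ0 ^ (r - s) ≤ τ0 ^ 1 :=
            pow_le_pow_of_le_one hτ0pos.le (min_le_left _ _) (by omega)
          _ = τ0 := pow_one τ0
        rw [hsplit]
        exact mul_le_mul_of_nonneg_left hle1 hτs.le
      have h3 : (r:ℝ) * π * τ0 ^ s ≤ ρ * s * (τ0 ^ s * τ0) :=
        le_trans h2 (mul_le_mul_of_nonneg_left hτr hc1.le)
      have h4 : (r:ℝ) * π * τ0 ^ s ≤ (ρ * s * τ0) * τ0 ^ s := by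
        calc (r:ℝ) * π * τ0 ^ s ≤ ρ * s * (τ0 ^ s * τ0) := h3
        _ = (ρ * s * τ0) * τ0 ^ s := by ring
      exact le_of_mul_le_mul_right h4 hτs
    have hle2 : ρ * s * τ0 ≤ ρ * s * ((r:ℝ) * π / (2 * (ρ * s))) :=
      mul_le_mul_of_nonneg_left (min_le_right _ _) hc1.le
    have heq : ρ * s * ((r:ℝ) * π / (2 * (ρ * s))) = (r:ℝ) * π / 2 := by
      field_simp [left_ne_zero_of_mul hc1.ne']
    nlinarith

noncomputable def Sv (r : ℕ) (F : Finset (Finset (Fin n))) (x : Fin n → ℝ) (u : Fin n) : ℝ :=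
  ∑ f ∈ F.filter (fun f => u ∈ f), ∏ j ∈ f.erase u, x j

lemma PP_update {r : ℕ} {F : Finset (Finset (Fin n))} (x : Fin n → ℝ) (u : Fin n) (b : ℝ) :
    PP r F (Function.update x u b) = PP r F x + r * ((b - x u) * Sv r F x u) := by
  classical
  unfold PP Sv
  rw [← Finset.sum_filter_add_sum_filter_not F (fun f => u ∈ f)
      (fun e => ∏ j ∈ e, Function.update x u b j),
    ← Finset.sum_filter_add_sum_filter_not F (fun f => u ∈ f) (fun e => ∏ j ∈ e, x j)]
  have h1 : ∀ f ∈ F.filter (fun f => u ∈ f),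
      ∏ j ∈ f, Function.update x u b j = b * ∏ j ∈ f.erase u, x j := by
    intro f hf
    rw [Finset.prod_update_of_mem (Finset.mem_filter.mp hf).2,
      Finset.sdiff_singleton_eq_erase]
  have h2 : ∀ f ∈ F.filter (fun f => ¬ u ∈ f),
      ∏ j ∈ f, Function.update x u b j = ∏ j ∈ f, x j := by
    intro f hf
    refine Finset.prod_congr rfl fun j hj => Function.update_of_ne ?_ _ _
    rintro rfl
    exact (Finset.mem_filter.mp hf).2 hj
  have h3 : ∀ f ∈ F.filter (fun f => u ∈ f),
      ∏ j ∈ f, x j = x u * ∏ j ∈ f.erase u, x j := fun f hf =>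
    (Finset.mul_prod_erase f x (Finset.mem_filter.mp hf).2).symm
  rw [Finset.sum_congr rfl h1, Finset.sum_congr rfl h2, Finset.sum_congr rfl h3,
    ← Finset.mul_sum, ← Finset.mul_sum]
  ring

lemma sum_update_pow {r : ℕ} (x : Fin n → ℝ) (u : Fin n) (b : ℝ) :
    ∑ i, (Function.update x u b) i ^ r = (∑ i, x i ^ r) - x u ^ r + b ^ r := by
  classical
  have h1 : ∀ i : Fin n, (Function.update x u b) i ^ r
      = Function.update (fun i => x i ^ r) u (b ^ r) i := by
    intro i
    exact Function.apply_update (fun _ v => v ^ r) x u b i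
  rw [Finset.sum_congr rfl fun i _ => h1 i,
    Finset.sum_update_of_mem (Finset.mem_univ u)]
  have h2 : ∑ i ∈ Finset.univ \ {u}, x i ^ r = (∑ i, x i ^ r) - x u ^ r := by
    have := Finset.sum_sdiff (f := fun i => x i ^ r)
      (Finset.singleton_subset_iff.mpr (Finset.mem_univ u))
    simp only [Finset.sum_singleton] at this
    linarith
  rw [h2]; ring

lemma eigen {r : ℕ} {F : Finset (Finset (Fin n))} (hr : 2 ≤ r) (hn : 0 < n)
    (huF : ∀ e ∈ F, e.card = r) {x : Fin n → ℝ}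
    (hx1 : ∀ i, 0 ≤ x i) (hx2 : ∑ i, x i ^ r = 1) (hxv : PP r F x = specRad r F)
    {u : Fin n} (hu : 0 < x u) :
    Sv r F x u = specRad r F * x u ^ (r - 1) := by
  classical
  have hr0 : 0 < r := by omega
  have hrne : ((r:ℝ)) ≠ 0 := by positivity
  set ρ := specRad r F with hρ
  set S := Sv r F x u with hS
  set a := x u with ha
  have key : ∀ ζ : ℝ, -a ≤ ζ → (r:ℝ) * (ζ * S) ≤ ρ * ((a + ζ) ^ r - a ^ r) := by
    intro ζ hζ
    have h1 : ∀ i, 0 ≤ Function.update x u (a + ζ) i := by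
      intro i
      rcases eq_or_ne i u with rfl | hne
      · rw [Function.update_self]; linarith
      · rw [Function.update_of_ne hne]; exact hx1 i
    have h2 := homog hr hn huF h1
    rw [PP_update, sum_update_pow, hx2, hxv] at h2
    have hexp : ρ * (1 - x u ^ r + (a + ζ) ^ r) = ρ + ρ * ((a + ζ) ^ r - a ^ r) := by
      rw [← ha]; ring
    rw [hexp] at h2
    have : (a + ζ - x u) = ζ := by rw [← ha]; ring
    rw [this] at h2
    linarith
  have hloc : IsLocalMin (fun ζ : ℝ => ρ * ((a + ζ) ^ r - a ^ r) - (r:ℝ) * (ζ * S)) 0 := by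
    have hball : Set.Ioo (-a) a ∈ nhds (0:ℝ) := Ioo_mem_nhds (by linarith) hu
    refine Filter.eventually_of_mem hball fun ζ hζ => ?_
    have h := key ζ hζ.1.le
    simp only [add_zero, sub_self, mul_zero, zero_mul]
    linarith
  have hder : HasDerivAt (fun ζ : ℝ => ρ * ((a + ζ) ^ r - a ^ r) - (r:ℝ) * (ζ * S))
      (ρ * ((r : ℕ) * (a + 0) ^ (r - 1) * 1) - (r:ℝ) * S) 0 := by
    have h1 : HasDerivAt (fun ζ : ℝ => a + ζ) 1 0 := (hasDerivAt_id 0).const_add a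
    have h2 := h1.pow r
    have h3 := (h2.sub_const (a ^ r)).const_mul ρ
    have h4 : HasDerivAt (fun ζ : ℝ => (r:ℝ) * (ζ * S)) ((r:ℝ) * S) 0 := by
      simpa using ((hasDerivAt_id 0).mul_const S).const_mul (r:ℝ)
    exact h3.sub h4
  have hzero := hloc.hasDerivAt_eq_zero hder
  have hres : ρ * ((r:ℝ) * a ^ (r - 1)) = (r:ℝ) * S := by
    rw [add_zero, mul_one] at hzero
    linarith
  have : (r:ℝ) * S = (r:ℝ) * (ρ * a ^ (r - 1)) := by rw [← hres]; ring
  exact mul_left_cancel₀ hrne this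

lemma edge_upper {r : ℕ} {F : Finset (Finset (Fin n))} (hr : 2 ≤ r) (hn : 0 < n)
    (huF : ∀ e ∈ F, e.card = r) {x : Fin n → ℝ}
    (hx1 : ∀ i, 0 ≤ x i) (hx2 : ∑ i, x i ^ r = 1) (hxv : PP r F x = specRad r F)
    {f : Finset (Fin n)} (hf : f ∈ F) {j : Fin n} (hj : j ∈ f) (hjpos : 0 < x j) :
    ∏ i ∈ f, x i ≤ specRad r F * x j ^ r := by
  classical
  have heq := eigen hr hn huF hx1 hx2 hxv hjpos
  have h1 : ∏ i ∈ f.erase j, x i ≤ Sv r F x j := by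
    unfold Sv
    exact Finset.single_le_sum (f := fun g : Finset (Fin n) => ∏ i ∈ g.erase j, x i)
      (fun g _ => Finset.prod_nonneg fun i _ => hx1 i) (by simp [hf, hj])
  have hxx : x j * x j ^ (r - 1) = x j ^ r := by
    rw [← pow_succ']
    congr 1
    omega
  calc ∏ i ∈ f, x i = x j * ∏ i ∈ f.erase j, x i := (Finset.mul_prod_erase f x hj).symm
    _ ≤ x j * Sv r F x j := mul_le_mul_of_nonneg_left h1 hjpos.le
    _ = specRad r F * (x j * x j ^ (r - 1)) := by rw [heq]; ring
    _ = specRad r F * x j ^ r := by rw [hxx]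

lemma edge_lower {r : ℕ} {F : Finset (Finset (Fin n))} (hr : 2 ≤ r) (hn : 0 < n)
    (huF : ∀ e ∈ F, e.card = r) {x : Fin n → ℝ}
    (hx1 : ∀ i, 0 ≤ x i) (hx2 : ∑ i, x i ^ r = 1) (hxv : PP r F x = specRad r F)
    {f : Finset (Fin n)} (hf : f ∈ F) (hall : ∀ i ∈ f, 0 < x i) {v : Fin n} (hv : v ∈ f) :
    x v ^ r ≤ specRad r F ^ (r - 1) * ∏ i ∈ f, x i := by
  classical
  set ρ := specRad r F with hρ
  set p := ∏ i ∈ f, x i with hp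
  have hppos : 0 < p := Finset.prod_pos hall
  have hρpos : 0 < ρ := by
    have h1 := edge_upper hr hn huF hx1 hx2 hxv hf hv (hall v hv)
    nlinarith [pow_nonneg (hx1 v) r]
  have hcard : (f.erase v).card = r - 1 := by
    rw [Finset.card_erase_of_mem hv, huF f hf]
  have h1 : ∀ j ∈ f.erase v, p ≤ ρ * x j ^ r := fun j hj =>
    edge_upper hr hn huF hx1 hx2 hxv hf (Finset.mem_of_mem_erase hj)
      (hall j (Finset.mem_of_mem_erase hj))
  have h2 : ∏ _j ∈ f.erase v, p ≤ ∏ j ∈ f.erase v, (ρ * x j ^ r) :=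
    Finset.prod_le_prod (fun _ _ => hppos.le) h1
  rw [Finset.prod_const, hcard] at h2
  have h2' : p ^ (r - 1) ≤ ρ ^ (r - 1) * (∏ j ∈ f.erase v, x j) ^ r := by
    calc p ^ (r - 1) ≤ ∏ j ∈ f.erase v, (ρ * x j ^ r) := h2
      _ = ρ ^ (r - 1) * (∏ j ∈ f.erase v, x j) ^ r := by
        rw [Finset.prod_mul_distrib, Finset.prod_const, hcard, Finset.prod_pow]
  have h3 : (∏ j ∈ f.erase v, x j) ^ r * x v ^ r = p ^ r := by
    rw [← mul_pow, Finset.prod_erase_mul f x hv]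
  have h4 : p ^ (r - 1) * x v ^ r ≤ ρ ^ (r - 1) * p ^ r := by
    calc p ^ (r - 1) * x v ^ r
        ≤ (ρ ^ (r - 1) * (∏ j ∈ f.erase v, x j) ^ r) * x v ^ r :=
          mul_le_mul_of_nonneg_right h2' (pow_nonneg (hx1 v) r)
      _ = ρ ^ (r - 1) * ((∏ j ∈ f.erase v, x j) ^ r * x v ^ r) := by ring
      _ = ρ ^ (r - 1) * p ^ r := by rw [h3]
  have h5 : p ^ r = p ^ (r - 1) * p := by
    rw [← pow_succ]
    congr 1
    omega
  have h6 : 0 < p ^ (r - 1) := pow_pos hppos _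
  have h7 : p ^ (r - 1) * x v ^ r ≤ p ^ (r - 1) * (ρ ^ (r - 1) * p) := by
    rw [h5] at h4
    linarith [h4]
  exact le_of_mul_le_mul_left h7 h6

lemma exists_heavy {r : ℕ} (hn : 0 < n) {x : Fin n → ℝ} (hx2 : ∑ i, x i ^ r = 1) :
    ∃ w, 1 / (n:ℝ) ≤ x w ^ r := by
  by_contra h
  push_neg at h
  have : Nonempty (Fin n) := ⟨⟨0, hn⟩⟩
  have hlt : ∑ i, x i ^ r < ∑ _i : Fin n, (1:ℝ)/n :=
    Finset.sum_lt_sum_of_nonempty Finset.univ_nonempty fun i _ => h i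
  have hsum : ∑ _i : Fin n, (1:ℝ)/n = 1 := by
    rw [Finset.sum_const, Finset.card_univ, Fintype.card_fin, nsmul_eq_mul]
    field_simp
  rw [hx2, hsum] at hlt
  linarith

lemma hconn_snoc {E : Finset (Finset (Fin n))} : ∀ {k : ℕ} {u v : Fin n}, hconn E k u v →
    ∀ {e : Finset (Fin n)}, e ∈ E → v ∈ e → ∀ {z : Fin n}, z ∈ e → hconn E (k+1) u z := by
  intro k
  induction k with
  | zero =>
    intro u v h e he hv z hz
    exact ⟨e, he, z, hz, h ▸ hv, rfl⟩
  | succ k IH =>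
    intro u v h e he hv z hz
    obtain ⟨e', he', w', hw', hue', htail⟩ := h
    exact ⟨e', he', w', hw', hue', IH htail he hv hz⟩

lemma pos_prop {r : ℕ} {F : Finset (Finset (Fin n))} (hr : 2 ≤ r) (hn : 0 < n)
    (huF : ∀ e ∈ F, e.card = r) {x : Fin n → ℝ}
    (hx1 : ∀ i, 0 ≤ x i) (hx2 : ∑ i, x i ^ r = 1) (hxv : PP r F x = specRad r F) :
    ∀ (k : ℕ) (u v : Fin n), hconn F k u v → 0 < x u → 0 < x v := by
  intro k
  induction k with
  | zero =>
    intro u v h hu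
    exact h ▸ hu
  | succ k IH =>
    intro u v h hu
    obtain ⟨e, he, w', hw', hue, htail⟩ := h
    have hall := support_pos hr hn huF hx1 hx2 hxv he hue hu
    exact IH w' v htail (hall w' hw')

lemma hdist_le_hdiam {E : Finset (Finset (Fin n))} (u v : Fin n) :
    hdist E u v ≤ hdiam E := by
  have hbdd : BddAbove {d | ∃ u v : Fin n, hdist E u v = d} := by
    have hset : {d | ∃ u v : Fin n, hdist E u v = d}
        = Set.range (fun p : Fin n × Fin n => hdist E p.1 p.2) := by
      ext d
      constructor
      · rintro ⟨a, b, h⟩; exact ⟨(a, b), h⟩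
      · rintro ⟨⟨a, b⟩, h⟩; exact ⟨a, b, h⟩
    rw [hset]
    exact (Set.finite_range _).bddAbove
  exact le_csSup hbdd ⟨u, v, rfl⟩

lemma key_upper {r : ℕ} {E : Finset (Finset (Fin n))} (hr : 2 ≤ r) (hn : 0 < n)
    (huE : ∀ e ∈ E, e.card = r) (hc : HConnected E)
    {e0 : Finset (Fin n)} (he0 : e0 ∈ E)
    {z : Fin n → ℝ} (hz1 : ∀ i, 0 ≤ z i) (hz2 : ∑ i, z i ^ r = 1) :
    PP r (E.erase e0) z ≤ specRad r E - (∑ u ∈ e0, z u ^ r) / specRad r E ^ (r - 1) := by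
  classical
  have hr0 : 0 < r := by omega
  have hrne : ((r:ℝ)) ≠ 0 := by positivity
  obtain ⟨y, hy1, hy2, hyv⟩ := exists_max (F := E) hr0 hn
  set ρ := specRad r E with hρ
  have hρ1 : 1 ≤ ρ := one_le_specRad hr hn he0 (huE e0 he0)
  have hρpos : 0 < ρ := by linarith
  obtain ⟨w0, hw0⟩ := exists_heavy (r := r) hn hy2
  have hw0pos : 0 < y w0 := by
    have h1 : (0:ℝ) < 1/n := by positivity
    by_contra h
    push_neg at h
    have hy0 : y w0 = 0 := le_antisymm h (hy1 w0)
    rw [hy0, zero_pow hr0.ne'] at hw0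
    linarith
  have hypos : ∀ u, 0 < y u := by
    intro u
    obtain ⟨k, hk⟩ := hc w0 u
    exact pos_prop hr hn huE hy1 hy2 hyv k w0 u hk hw0pos
  have hW : ∀ j, ∑ f ∈ E.filter (fun f => j ∈ f), ∏ i ∈ f, y i = ρ * y j ^ r := by
    intro j
    have h1 : ∀ f ∈ E.filter (fun f => j ∈ f), ∏ i ∈ f, y i = y j * ∏ i ∈ f.erase j, y i :=
      fun f hf => (Finset.mul_prod_erase f y (Finset.mem_filter.mp hf).2).symm
    rw [Finset.sum_congr rfl h1, ← Finset.mul_sum]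
    have h2 : ∑ f ∈ E.filter (fun f => j ∈ f), ∏ i ∈ f.erase j, y i = Sv r E y j := rfl
    rw [h2, eigen hr hn huE hy1 hy2 hyv (hypos j)]
    have h3 : y j * y j ^ (r-1) = y j ^ r := by
      rw [← pow_succ']; congr 1; omega
    rw [← mul_assoc, mul_comm (y j) ρ, mul_assoc, h3]
  set t : Fin n → ℝ := fun j => z j / y j with ht
  have ht0 : ∀ j, 0 ≤ t j := fun j => div_nonneg (hz1 j) (hypos j).le
  have hzty : ∀ j, z j = y j * t j := by
    intro j
    have hyne : y j ≠ 0 := (hypos j).ne'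
    rw [ht]
    field_simp
  have htyr : ∀ j, t j ^ r * y j ^ r = z j ^ r := by
    intro j
    rw [← mul_pow]
    congr 1
    rw [mul_comm]
    exact (hzty j).symm
  have hAMGM : ∀ f ∈ E, ∏ j ∈ f, t j ≤ (∑ j ∈ f, t j ^ r) / r := by
    intro f hf
    have hcard := huE f hf
    have hgm := Real.geom_mean_le_arith_mean_weighted f (fun _ => (r:ℝ)⁻¹)
      (fun j => t j ^ r) (fun i _ => by positivity)
      (by rw [Finset.sum_const, hcard, nsmul_eq_mul, mul_inv_cancel₀ hrne])
      (fun i _ => pow_nonneg (ht0 i) r)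
    have heq : ∀ j ∈ f, ((t j ^ r : ℝ)) ^ ((r:ℝ)⁻¹) = t j := by
      intro j _
      rw [← Real.rpow_natCast (t j) r, ← Real.rpow_mul (ht0 j),
        mul_inv_cancel₀ hrne, Real.rpow_one]
    rw [Finset.prod_congr rfl heq] at hgm
    calc ∏ j ∈ f, t j ≤ ∑ j ∈ f, (r:ℝ)⁻¹ * t j ^ r := hgm
      _ = (∑ j ∈ f, t j ^ r) / r := by rw [← Finset.mul_sum]; ring
  have step1 : PP r (E.erase e0) z ≤ ∑ f ∈ E.erase e0, (∏ i ∈ f, y i) * (∑ j ∈ f, t j ^ r) := by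
    unfold PP
    have h1 : ∀ f ∈ E.erase e0, ∏ j ∈ f, z j ≤ (∏ i ∈ f, y i) * ((∑ j ∈ f, t j ^ r) / r) := by
      intro f hf
      have hfE : f ∈ E := Finset.mem_of_mem_erase hf
      have hprod : ∏ j ∈ f, z j = (∏ i ∈ f, y i) * ∏ j ∈ f, t j := by
        rw [← Finset.prod_mul_distrib]
        exact Finset.prod_congr rfl fun j _ => hzty j
      rw [hprod]
      exact mul_le_mul_of_nonneg_left (hAMGM f hfE)
        (Finset.prod_nonneg fun i _ => (hypos i).le)
    calc (r:ℝ) * ∑ f ∈ E.erase e0, ∏ j ∈ f, z j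
        ≤ (r:ℝ) * ∑ f ∈ E.erase e0, (∏ i ∈ f, y i) * ((∑ j ∈ f, t j ^ r) / r) :=
          mul_le_mul_of_nonneg_left (Finset.sum_le_sum h1) (by positivity)
      _ = ∑ f ∈ E.erase e0, (∏ i ∈ f, y i) * (∑ j ∈ f, t j ^ r) := by
          rw [Finset.mul_sum]
          refine Finset.sum_congr rfl fun f _ => ?_
          field_simp
  have step2 : ∑ f ∈ E.erase e0, (∏ i ∈ f, y i) * (∑ j ∈ f, t j ^ r)
      = ∑ j, t j ^ r * ∑ f ∈ (E.erase e0).filter (fun f => j ∈ f), ∏ i ∈ f, y i := by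
    have h1 : ∀ f ∈ E.erase e0, (∏ i ∈ f, y i) * (∑ j ∈ f, t j ^ r)
        = ∑ j, (if j ∈ f then t j ^ r * ∏ i ∈ f, y i else 0) := by
      intro f _
      rw [Finset.sum_ite_mem, Finset.univ_inter, Finset.mul_sum]
      exact Finset.sum_congr rfl fun j _ => mul_comm _ _
    rw [Finset.sum_congr rfl h1, Finset.sum_comm]
    refine Finset.sum_congr rfl fun j _ => ?_
    rw [Finset.mul_sum, ← Finset.sum_filter]
  set χ : Fin n → ℝ := fun j => if j ∈ e0 then 1 else 0 with hχ
  have hχ0 : ∀ j, 0 ≤ χ j := by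
    intro j; rw [hχ]; dsimp only; split
    · exact zero_le_one
    · exact le_rfl
  have hlow : ∀ j ∈ e0, y j ^ r / ρ ^ (r-1) ≤ ∏ i ∈ e0, y i := by
    intro j hj
    have h := edge_lower hr hn huE hy1 hy2 hyv he0 (fun i _ => hypos i) hj
    rw [div_le_iff₀ (pow_pos hρpos _)]
    calc y j ^ r ≤ ρ ^ (r-1) * ∏ i ∈ e0, y i := h
      _ = (∏ i ∈ e0, y i) * ρ ^ (r-1) := by ring
  have hW' : ∀ j, (∑ f ∈ (E.erase e0).filter (fun f => j ∈ f), ∏ i ∈ f, y i)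
      ≤ ρ * y j ^ r - χ j * (y j ^ r / ρ ^ (r-1)) := by
    intro j
    by_cases hj : j ∈ e0
    · have h1 : (E.erase e0).filter (fun f => j ∈ f) = (E.filter (fun f => j ∈ f)).erase e0 := by
        ext f
        simp only [Finset.mem_filter, Finset.mem_erase]
        tauto
      rw [h1, Finset.sum_erase_eq_sub (Finset.mem_filter.mpr ⟨he0, hj⟩), hW j]
      have h2 := hlow j hj
      have hχj : χ j = 1 := by rw [hχ]; simp [hj]
      rw [hχj, one_mul]
      linarith
    · have h1 : (E.erase e0).filter (fun f => j ∈ f) = E.filter (fun f => j ∈ f) := by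
        ext f
        simp only [Finset.mem_filter, Finset.mem_erase]
        constructor
        · rintro ⟨⟨_, hf⟩, hjf⟩; exact ⟨hf, hjf⟩
        · rintro ⟨hf, hjf⟩
          refine ⟨⟨?_, hf⟩, hjf⟩
          rintro rfl; exact hj hjf
      have hχj : χ j = 0 := by rw [hχ]; simp [hj]
      rw [h1, hW j, hχj]
      simp
  have step3 : ∑ j, t j ^ r * ∑ f ∈ (E.erase e0).filter (fun f => j ∈ f), ∏ i ∈ f, y i
      ≤ ∑ j, (ρ * z j ^ r - χ j * (z j ^ r / ρ ^ (r-1))) := by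
    refine Finset.sum_le_sum fun j _ => ?_
    have h1 : t j ^ r * (∑ f ∈ (E.erase e0).filter (fun f => j ∈ f), ∏ i ∈ f, y i)
        ≤ t j ^ r * (ρ * y j ^ r - χ j * (y j ^ r / ρ ^ (r-1))) :=
      mul_le_mul_of_nonneg_left (hW' j) (pow_nonneg (ht0 j) r)
    refine le_trans h1 (le_of_eq ?_)
    have expand : t j ^ r * (ρ * y j ^ r - χ j * (y j ^ r / ρ ^ (r-1)))
        = ρ * (t j ^ r * y j ^ r) - χ j * ((t j ^ r * y j ^ r) / ρ ^ (r-1)) := by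
      ring
    rw [expand, htyr j]
  have step4 : ∑ j, (ρ * z j ^ r - χ j * (z j ^ r / ρ ^ (r-1)))
      = ρ - (∑ u ∈ e0, z u ^ r) / ρ ^ (r-1) := by
    rw [Finset.sum_sub_distrib, ← Finset.mul_sum, hz2, mul_one]
    congr 1
    have h1 : ∀ j : Fin n, χ j * (z j ^ r / ρ ^ (r-1))
        = if j ∈ e0 then z j ^ r / ρ ^ (r-1) else 0 := by
      intro j; rw [hχ]; dsimp only; split
      · rw [one_mul]
      · rw [zero_mul]
    rw [Finset.sum_congr rfl fun j _ => h1 j, Finset.sum_ite_mem, Finset.univ_inter,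
      ← Finset.sum_div]
  calc PP r (E.erase e0) z
      ≤ ∑ f ∈ E.erase e0, (∏ i ∈ f, y i) * (∑ j ∈ f, t j ^ r) := step1
    _ = ∑ j, t j ^ r * ∑ f ∈ (E.erase e0).filter (fun f => j ∈ f), ∏ i ∈ f, y i := step2
    _ ≤ ∑ j, (ρ * z j ^ r - χ j * (z j ^ r / ρ ^ (r-1))) := step3
    _ = ρ - (∑ u ∈ e0, z u ^ r) / ρ ^ (r-1) := step4

end SR19

theorem stmt_19 (n r : ℕ) (hr : 2 ≤ r) (E : Finset (Finset (Fin n)))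
    (hu : ∀ e ∈ E, e.card = r) (hc : HConnected E) (D : ℕ) (hD : hdiam E = D)
    (E' : Finset (Finset (Fin n))) (hsub : E' ⊆ E) (hne : E' ≠ E) :
    specRad r E - specRad r E' ≥
      min ((r : ℝ) / (n * specRad r E ^ (r * (r - 1) * (D + 1))))
        (1 / (n * specRad r E ^ (r * D) * (specRad r E ^ (r - 1) + (r : ℝ) - 1))) := by
  classical
  have hr0 : 0 < r := by omega
  obtain ⟨e0, he0, he0'⟩ : ∃ e ∈ E, e ∉ E' := by
    by_contra h
    push_neg at h
    exact hne (Finset.Subset.antisymm hsub h)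
  have hcard0 := hu e0 he0
  have hnr : r ≤ n := by
    have h := Finset.card_le_univ e0
    rwa [hcard0, Fintype.card_fin] at h
  have hn0 : 0 < n := by omega
  set ρ := specRad r E with hρdef
  have hρ1 : 1 ≤ ρ := SR19.one_le_specRad hr hn0 he0 hcard0
  have hρpos : 0 < ρ := by linarith
  have hu'' : ∀ e ∈ E.erase e0, e.card = r := fun e he => hu e (Finset.mem_of_mem_erase he)
  obtain ⟨x, hx1, hx2, hxv⟩ := SR19.exists_max (F := E.erase e0) (r := r) hr0 hn0
  obtain ⟨w, hw⟩ := SR19.exists_heavy (r := r) hn0 hx2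
  set KS : Set ℕ := {m | ∃ b ∈ e0, hconn E m w b} with hKS
  have hKSne : KS.Nonempty := by
    have he0ne : e0.Nonempty := Finset.card_pos.mp (by rw [hcard0]; omega)
    obtain ⟨b, hb⟩ := he0ne
    obtain ⟨m, hm⟩ := hc w b
    exact ⟨m, b, hb, hm⟩
  set k := sInf KS with hk
  obtain ⟨a, ha, hwalk⟩ : ∃ b ∈ e0, hconn E k w b := Nat.sInf_mem hKSne
  have hkD : k ≤ D := by
    have h1 : hconn E (hdist E w a) w a := Nat.sInf_mem (hc w a)
    have h2 : k ≤ hdist E w a := Nat.sInf_le ⟨a, ha, h1⟩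
    have h3 : hdist E w a ≤ hdiam E := SR19.hdist_le_hdiam w a
    omega
  set ρ'' := specRad r (E.erase e0) with hρ''def
  have hρ''ρ : ρ'' ≤ ρ := SR19.specRad_mono hr0 hn0 (Finset.erase_subset e0 E)
  have claim : ∀ m : ℕ, ∀ u : Fin n, ∀ c : ℝ, 0 < c → hconn E m u a →
      hconn E (k - m) w u → m ≤ k → c ≤ x u ^ r → c / ρ ^ (r * m) ≤ x a ^ r := by
    intro m
    induction m with
    | zero =>
      intro u c hc0 h0 _ _ hcu
      have hua : u = a := h0
      subst hua
      simpa using hcu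
    | succ m IH =>
      intro u c hc0 hconn1 hwu hmk hcu
      obtain ⟨e, he, w', hw'e, hue, htail⟩ := hconn1
      have hene0 : e ≠ e0 := by
        intro heq
        have hue0 : u ∈ e0 := heq ▸ hue
        have hmem : (k - (m+1)) ∈ KS := ⟨u, hue0, hwu⟩
        have hle := Nat.sInf_le hmem
        omega
      have heE'' : e ∈ E.erase e0 := Finset.mem_erase.mpr ⟨hene0, he⟩
      have hxu : 0 < x u := by
        rcases (hx1 u).lt_or_eq with h | h
        · exact h
        · exfalso
          rw [← h, zero_pow hr0.ne'] at hcu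
          linarith
      have hall := SR19.support_pos hr hn0 hu'' hx1 hx2 hxv heE'' hue hxu
      have hppos : 0 < ∏ i ∈ e, x i := Finset.prod_pos hall
      have h8a := SR19.edge_upper hr hn0 hu'' hx1 hx2 hxv heE'' hw'e (hall w' hw'e)
      have h8b := SR19.edge_lower hr hn0 hu'' hx1 hx2 hxv heE'' hall hue
      have hρ''pos : 0 < ρ'' := by
        have h := SR19.edge_upper hr hn0 hu'' hx1 hx2 hxv heE'' hue hxu
        nlinarith [pow_nonneg (hx1 u) r]
      have hstep : c / ρ ^ r ≤ x w' ^ r := by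
        have h1 : c ≤ ρ'' ^ (r-1) * ∏ i ∈ e, x i := le_trans hcu h8b
        have h2 : ρ'' ^ (r-1) * ∏ i ∈ e, x i ≤ ρ'' ^ (r-1) * (ρ'' * x w' ^ r) :=
          mul_le_mul_of_nonneg_left h8a (pow_nonneg hρ''pos.le _)
        have h3 : ρ'' ^ (r-1) * (ρ'' * x w' ^ r) = ρ'' ^ r * x w' ^ r := by
          rw [← mul_assoc, ← pow_succ]
          congr 2
          omega
        have h4 : ρ'' ^ r ≤ ρ ^ r := pow_le_pow_left₀ hρ''pos.le hρ''ρ r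
        have h5 : c ≤ ρ ^ r * x w' ^ r := by
          have h6 : ρ'' ^ r * x w' ^ r ≤ ρ ^ r * x w' ^ r :=
            mul_le_mul_of_nonneg_right h4 (pow_nonneg (hx1 w') r)
          calc c ≤ ρ'' ^ (r-1) * (ρ'' * x w' ^ r) := le_trans h1 h2
            _ = ρ'' ^ r * x w' ^ r := h3
            _ ≤ ρ ^ r * x w' ^ r := h6
        rw [div_le_iff₀ (pow_pos hρpos r)]
        linarith [h5]
      have hwnext : hconn E (k - m) w w' := by
        have h1 := SR19.hconn_snoc hwu he hue hw'e
        have heq : k - (m+1) + 1 = k - m := by omega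
        rwa [heq] at h1
      have hres := IH w' (c / ρ ^ r) (by positivity) htail hwnext (by omega) hstep
      have heq2 : c / ρ ^ r / ρ ^ (r * m) = c / ρ ^ (r * (m+1)) := by
        rw [div_div, ← pow_add]
        congr 2
        ring
      rwa [heq2] at hres
  have h0walk : hconn E (k - k) w w := by
    rw [Nat.sub_self]
    rfl
  have hxa := claim k w (1/(n:ℝ)) (by positivity) hwalk h0walk le_rfl hw
  have hxa2 : 1 / ((n:ℝ) * ρ ^ (r * D)) ≤ x a ^ r := by
    have hle : ρ ^ (r * k) ≤ ρ ^ (r * D) := pow_le_pow_right₀ hρ1 (Nat.mul_le_mul_left r hkD)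
    have h1 : 1 / ((n:ℝ) * ρ ^ (r * D)) ≤ 1 / ((n:ℝ) * ρ ^ (r * k)) := by
      apply one_div_le_one_div_of_le
      · positivity
      · exact mul_le_mul_of_nonneg_left hle (by positivity)
    have h2 : (1:ℝ) / n / ρ ^ (r * k) = 1 / ((n:ℝ) * ρ ^ (r * k)) := div_div 1 _ _
    rw [← h2] at h1
    exact le_trans h1 hxa
  have hσ : 1 / ((n:ℝ) * ρ ^ (r * D)) ≤ ∑ u ∈ e0, x u ^ r :=
    le_trans hxa2 (Finset.single_le_sum (f := fun u => x u ^ r)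
      (fun i _ => pow_nonneg (hx1 i) r) ha)
  have hkey := SR19.key_upper hr hn0 hu hc he0 hx1 hx2
  rw [hxv] at hkey
  have hmono : specRad r E' ≤ ρ'' :=
    SR19.specRad_mono hr0 hn0 (Finset.subset_erase.mpr ⟨hsub, he0'⟩)
  have hgap : 1 / ((n:ℝ) * ρ ^ (r * D)) / ρ ^ (r-1) ≤ ρ - specRad r E' := by
    have h1 : (∑ u ∈ e0, x u ^ r) / ρ ^ (r-1) ≤ ρ - ρ'' := by linarith
    have h2 : 1 / ((n:ℝ) * ρ ^ (r * D)) / ρ ^ (r-1) ≤ (∑ u ∈ e0, x u ^ r) / ρ ^ (r-1) :=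
      (div_le_div_iff_of_pos_right (pow_pos hρpos _)).mpr hσ
    linarith
  have hT2 : min ((r : ℝ) / (n * ρ ^ (r * (r - 1) * (D + 1))))
      (1 / (n * ρ ^ (r * D) * (ρ ^ (r - 1) + (r : ℝ) - 1)))
      ≤ 1 / ((n:ℝ) * ρ ^ (r * D)) / ρ ^ (r-1) := by
    refine le_trans (min_le_right _ _) ?_
    rw [div_div]
    apply one_div_le_one_div_of_le
    · positivity
    · have hr2 : (2:ℝ) ≤ r := by exact_mod_cast hr
      have h3 : ρ ^ (r-1) ≤ ρ ^ (r-1) + (r:ℝ) - 1 := by linarith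
      have h4 : (n:ℝ) * ρ ^ (r*D) * ρ ^ (r-1)
          ≤ (n:ℝ) * ρ ^ (r*D) * (ρ ^ (r-1) + ((r:ℝ) - 1)) := by
        apply mul_le_mul_of_nonneg_left _ (by positivity)
        linarith
      linarith [h4]
  linarith [hT2, hgap]
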